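/- Assume w_j>0 for all j and each M_v has rank k. For v in {1,2,3}, let U_v be a d×k matrix with U_v^T M_v invertible. Then U_1^T P_{1,2} U_2 is invertible, and B_{1,2,3}(η) := (U_1^T P_{1,2,3}(η) U_2)(U_1^T P_{1,2} U_2)^{-1} equals (U_1^T M_1) diag(M_3^T η) (U_1^T M_1)^{-1}; in particular the k roots of the characteristic polynomial of B_{1,2,3}(η) are {⟨η, μ_{3,j}⟩ : j in [k]}. -/

import Mathlib

open Polynomial


lemma charpoly_diag {k : ℕ} (v : Fin k → ℝ) :
    (Matrix.diagonal v).charpoly = ∏ j : Fin k, (X - C (v j)) := by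
  rw [Matrix.charpoly]
  have : Matrix.charmatrix (Matrix.diagonal v)
      = Matrix.diagonal (fun j => (X : ℝ[X]) - C (v j)) := by
    ext i j
    by_cases h : i = j
    · subst h; simp [Matrix.charmatrix_apply_eq]
    · simp [Matrix.charmatrix_apply_ne _ _ _ h, Matrix.diagonal_apply_ne _ h]
  rw [this, Matrix.det_diagonal]

lemma charpoly_conj {k : ℕ} (A D : Matrix (Fin k) (Fin k) ℝ) (hA : IsUnit A) :
    (A * D * A⁻¹).charpoly = D.charpoly := by
  have hdet : IsUnit A.det := (Matrix.isUnit_iff_isUnit_det A).mp hA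
  have h1 : A * A⁻¹ = 1 := Matrix.mul_nonsing_inv A hdet
  have key : Matrix.charmatrix (A * D * A⁻¹)
      = (C : ℝ →+* ℝ[X]).mapMatrix A * Matrix.charmatrix D
        * (C : ℝ →+* ℝ[X]).mapMatrix A⁻¹ := by
    unfold Matrix.charmatrix
    rw [map_mul, map_mul, mul_sub, sub_mul]
    congr 1
    have : ((C : ℝ →+* ℝ[X]).mapMatrix A) * ((C : ℝ →+* ℝ[X]).mapMatrix A⁻¹) = 1 := by
      rw [← map_mul, h1, map_one]
    calc (Matrix.scalar (Fin k)) (X : ℝ[X])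
        = (Matrix.scalar (Fin k)) (X : ℝ[X]) * 1 := by rw [mul_one]
      _ = (Matrix.scalar (Fin k)) (X : ℝ[X]) * ((C : ℝ →+* ℝ[X]).mapMatrix A
            * (C : ℝ →+* ℝ[X]).mapMatrix A⁻¹) := by rw [this]
      _ = (C : ℝ →+* ℝ[X]).mapMatrix A * (Matrix.scalar (Fin k)) (X : ℝ[X])
            * (C : ℝ →+* ℝ[X]).mapMatrix A⁻¹ := by
          rw [← mul_assoc, Matrix.scalar_commute]
          intro r; exact Commute.all _ _
  have h1' : ((C : ℝ →+* ℝ[X]).mapMatrix A) * ((C : ℝ →+* ℝ[X]).mapMatrix A⁻¹) = 1 := by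
    rw [← map_mul, h1, map_one]
  rw [Matrix.charpoly, Matrix.charpoly, key, Matrix.det_mul, Matrix.det_mul]
  have := congrArg Matrix.det h1'
  rw [Matrix.det_mul, Matrix.det_one] at this
  calc _ = ((C : ℝ →+* ℝ[X]).mapMatrix A).det * ((C : ℝ →+* ℝ[X]).mapMatrix A⁻¹).det
            * (Matrix.charmatrix D).det := by ring
    _ = (Matrix.charmatrix D).det := by rw [this, one_mul]

/-- (Observable operator, general multi-view setting.) Assume `w_j > 0`
for all `j` and each `M_v` has rank `k`. For `U_v` with `U_vᵀ M_v` invertible,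
`U_1ᵀ P_{1,2} U_2` is invertible, the operator
`B_{1,2,3}(η) := (U_1ᵀ P_{1,2,3}(η) U_2)(U_1ᵀ P_{1,2} U_2)⁻¹` equals
`(U_1ᵀ M_1) diag(M_3ᵀ η) (U_1ᵀ M_1)⁻¹`, and the `k` roots of its characteristic
polynomial are `⟨η, μ_{3,j}⟩` for `j ∈ [k]`. -/
theorem stmt_4 {d k : ℕ} (M1 M2 M3 : Matrix (Fin d) (Fin k) ℝ) (w : Fin k → ℝ)
    (hM1 : M1.rank = k) (hM2 : M2.rank = k) (hM3 : M3.rank = k)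
    (hw : ∀ j, 0 < w j)
    (U1 U2 U3 : Matrix (Fin d) (Fin k) ℝ)
    (hU1 : IsUnit (U1.transpose * M1)) (hU2 : IsUnit (U2.transpose * M2))
    (hU3 : IsUnit (U3.transpose * M3))
    (P12 : Matrix (Fin d) (Fin d) ℝ)
    (hP12 : P12 = M1 * Matrix.diagonal w * M2.transpose)
    (P123 : (Fin d → ℝ) → Matrix (Fin d) (Fin d) ℝ)
    (hP123 : ∀ η, P123 η
      = M1 * Matrix.diagonal (M3.transpose.mulVec η) * Matrix.diagonal w * M2.transpose) :
    IsUnit (U1.transpose * P12 * U2) ∧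
    ∀ η : Fin d → ℝ,
      (U1.transpose * P123 η * U2) * (U1.transpose * P12 * U2)⁻¹
        = (U1.transpose * M1) * Matrix.diagonal (M3.transpose.mulVec η)
            * (U1.transpose * M1)⁻¹ ∧
      ((U1.transpose * P123 η * U2) * (U1.transpose * P12 * U2)⁻¹).charpoly
        = ∏ j : Fin k, (X - C (∑ i, η i * M3 i j)) := by
  set A := U1.transpose * M1 with hA
  set B := M2.transpose * U2 with hB
  have hBunit : IsUnit B := by
    rw [Matrix.isUnit_iff_isUnit_det] at hU2 ⊢
    have : B = (U2.transpose * M2).transpose := by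
      rw [Matrix.transpose_mul, Matrix.transpose_transpose]
    rw [this, Matrix.det_transpose]; exact hU2
  have hDw : IsUnit (Matrix.diagonal w) := by
    rw [Matrix.isUnit_iff_isUnit_det, Matrix.det_diagonal]
    exact isUnit_iff_ne_zero.mpr (Finset.prod_ne_zero_iff.mpr fun j _ => (hw j).ne')
  have hfact : U1.transpose * P12 * U2 = A * Matrix.diagonal w * B := by
    rw [hP12]; simp only [Matrix.mul_assoc, hA, hB]
  have hmain : IsUnit (U1.transpose * P12 * U2) := by
    rw [hfact]; exact (hU1.mul hDw).mul hBunit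
  refine ⟨hmain, fun η => ?_⟩
  set D := Matrix.diagonal (M3.transpose.mulVec η) with hD
  have hfact2 : U1.transpose * P123 η * U2 = A * D * Matrix.diagonal w * B := by
    rw [hP123]; simp only [Matrix.mul_assoc, hA, hB, hD]
  have hconj : (U1.transpose * P123 η * U2) * (U1.transpose * P12 * U2)⁻¹
      = A * D * A⁻¹ := by
    rw [hfact2, hfact, Matrix.mul_inv_rev, Matrix.mul_inv_rev]
    have hB1 : B * B⁻¹ = 1 :=
      Matrix.mul_nonsing_inv B ((Matrix.isUnit_iff_isUnit_det B).mp hBunit)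
    have hDw1 : Matrix.diagonal w * (Matrix.diagonal w)⁻¹ = 1 :=
      Matrix.mul_nonsing_inv _ ((Matrix.isUnit_iff_isUnit_det _).mp hDw)
    calc A * D * Matrix.diagonal w * B * (B⁻¹ * ((Matrix.diagonal w)⁻¹ * A⁻¹))
        = A * D * (Matrix.diagonal w * (B * B⁻¹) * (Matrix.diagonal w)⁻¹) * A⁻¹ := by
          simp only [Matrix.mul_assoc]
      _ = A * D * A⁻¹ := by rw [hB1, Matrix.mul_one, hDw1, Matrix.mul_one]
  refine ⟨hconj, ?_⟩
  rw [hconj, charpoly_conj A D hU1, hD, charpoly_diag]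
  refine Finset.prod_congr rfl fun j _ => ?_
  have : M3.transpose.mulVec η j = ∑ i, η i * M3 i j := by
    simp [Matrix.mulVec, dotProduct, Matrix.transpose_apply, mul_comm]
  rw [this]
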